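/- Let C be a category with all limits and finite colimits, such that cofiltered limits commute with finite colimits in C, and let X be a profinite space. Then the cosheafification functor PCoSh(X,C) → CoSh(X,C) is exact: it preserves all limits (being a right adjoint) and also preserves finite colimits. -/

import Mathlib

open CategoryTheory CategoryTheory.Limits TopologicalSpace

attribute [local instance] CategoryTheory.ConcreteCategory.instFunLike

universe w' w v u v₂ u₂ v₁ u₁

namespace ProfiniteCosheaves

variable {C : Type u₂} [Category.{v₂} C]

/-- The canonical binary cofan `A(U) → A(U ⊔ V) ← A(V)` of a precosheaf `A` at a pair of
clopen subsets. -/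
def cosheafCofan {X : Type*} [TopologicalSpace X] (A : Clopens X ⥤ C) (U V : Clopens X) :
    BinaryCofan (A.obj U) (A.obj V) :=
  BinaryCofan.mk (A.map (homOfLE le_sup_left : U ⟶ U ⊔ V)) (A.map (homOfLE le_sup_right))

/-- A precosheaf (a functor on the poset of clopen subsets) is a cosheaf if its value at `∅`
is initial and, for disjoint clopens `U, V`, the canonical cofan exhibits `A(U ⊔ V)` as the
coproduct `A(U) ⨿ A(V)`. -/
structure IsCosheaf {X : Type*} [TopologicalSpace X] (A : Clopens X ⥤ C) : Prop where
  initial : Nonempty (IsInitial (A.obj ⊥))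
  binary : ∀ U V : Clopens X, Disjoint U V → Nonempty (IsColimit (cosheafCofan A U V))

/-- The category `CoSh(X, C)` of cosheaves over a profinite space `X` valued in `C`. -/
def CoSheaf (X : Profinite.{u}) (C : Type u₂) [Category.{v₂} C] :=
  ObjectProperty.FullSubcategory (fun A : Clopens X ⥤ C => IsCosheaf A)

instance (X : Profinite.{u}) : Category (CoSheaf X C) := ObjectProperty.FullSubcategory.category _

/-- Preimage of clopen subsets along a continuous map, as a functor. -/
def clopensComap {X Y : Profinite.{u}} (f : X ⟶ Y) : Clopens Y ⥤ Clopens X where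
  obj U := ⟨f ⁻¹' (U : Set Y), U.isClopen.preimage f.hom.hom.continuous⟩
  map {U V} h := homOfLE (fun x hx => leOfHom h hx)

theorem IsCosheaf.comap {X Y : Profinite.{u}} (f : X ⟶ Y) {A : Clopens X ⥤ C}
    (hA : IsCosheaf A) : IsCosheaf (clopensComap f ⋙ A) := by
  constructor
  · have e : (clopensComap f).obj ⊥ = ⊥ := by
      apply SetLike.ext'
      simp [clopensComap]
    exact ⟨hA.initial.some.ofIso (A.mapIso (eqToIso e.symm))⟩
  · intro U V hUV
    have hUV' : Disjoint ((clopensComap f).obj U) ((clopensComap f).obj V) := by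
      rw [disjoint_iff] at hUV ⊢
      have h0 : (U : Set (Y : Type u)) ∩ (V : Set (Y : Type u)) = ∅ := by
        have := congrArg (fun W : Clopens (Y : Type u) => (W : Set (Y : Type u))) hUV
        simpa using this
      apply SetLike.ext'
      exact Set.preimage_inter.symm.trans ((congrArg _ h0).trans Set.preimage_empty)
    obtain ⟨h⟩ := hA.binary _ _ hUV'
    have e : (clopensComap f).obj U ⊔ (clopensComap f).obj V = (clopensComap f).obj (U ⊔ V) := by
      apply SetLike.ext'
      exact Set.preimage_union.symm
    refine ⟨h.ofIsoColimit (Cocones.ext (A.mapIso (eqToIso e)) ?_)⟩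
    rintro ⟨⟨⟩⟩ <;>
      · dsimp [cosheafCofan]
        exact (A.map_comp _ _).symm.trans (congrArg A.map (Subsingleton.elim _ _))

/-- The direct image functor `f_* : CoSh(X, C) ⥤ CoSh(Y, C)`, `A ↦ A ∘ f⁻¹`. -/
def coshMapFun {X Y : Profinite.{u}} (f : X ⟶ Y) : CoSheaf X C ⥤ CoSheaf Y C :=
  ObjectProperty.lift _
    (ObjectProperty.ι _ ⋙ (Functor.whiskeringLeft (Clopens Y) (Clopens X) C).obj (clopensComap f))
    (fun A => A.property.comap f)

/-- The functor `Profinite ⥤ Cat` sending `X` to the category of cosheaves on `X` valued in `C`,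
and a continuous map to the direct image functor. -/
def coshFunctor (C : Type u₂) [Category.{v₂} C] : Profinite.{u} ⥤ Cat where
  obj X := Cat.of (CoSheaf X C)
  map f := (coshMapFun f).toCatHom
  map_id _ := rfl
  map_comp _ _ := rfl

/-- The total category `CoSh(C)` of profinite cosheaves valued in `C`, i.e. the Grothendieck
construction of `X ↦ CoSh(X, C)`. Objects are pairs `(X, A)` with `A` a cosheaf on `X`;
a morphism `(X, A) ⟶ (Y, B)` is a pair `(f, φ)` with `f : X ⟶ Y` continuous and
`φ : A ∘ f⁻¹ ⟶ B`. -/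
def CoSh (C : Type u₂) [Category.{v₂} C] :=
  Grothendieck (coshFunctor.{u} C)

instance : Category (CoSh.{u} C) := inferInstanceAs (Category (Grothendieck _))

/-- The global cosections functor `CoSh(C) ⥤ C`, `(A, X) ↦ A(X)`. -/
def globalCosections (C : Type u₂) [Category.{v₂} C] : CoSh.{u} C ⥤ C where
  obj P := (ObjectProperty.FullSubcategory.obj (P := fun A : Clopens P.base ⥤ C => IsCosheaf A)
    P.fiber).obj ⊤
  map {P Q} g :=
    (ObjectProperty.FullSubcategory.obj (P := fun A : Clopens P.base ⥤ C => IsCosheaf A)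
      P.fiber).map (homOfLE (fun x _ => Set.mem_univ _) : (⊤ : Clopens P.base) ⟶ _) ≫
      NatTrans.app (InducedCategory.Hom.hom
        (F := ObjectProperty.FullSubcategory.obj (P := fun A : Clopens Q.base ⥤ C => IsCosheaf A))
        g.fiber) ⊤
  map_id := by
    intro X
    refine (eq_whisker (X.fiber.obj.map_id ⊤) _).trans ?_
    refine (Category.id_comp _).trans ?_
    rfl
  map_comp := by
    intro P Q R f g
    refine (eq_whisker (P.fiber.obj.map_id ⊤) _).trans ?_
    refine (Category.id_comp _).trans ?_
    refine Eq.trans ?_ (congrArg₂ (· ≫ ·) (eq_whisker (P.fiber.obj.map_id ⊤) _).symm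
      (eq_whisker (Q.fiber.obj.map_id ⊤) _).symm)
    refine Eq.trans ?_ (congrArg₂ (· ≫ ·) (Category.id_comp _).symm (Category.id_comp _).symm)
    exact Category.id_comp _

/-- The poset of clopen neighbourhoods of a point, as a category. -/
def Nbhds (X : Profinite.{u}) (x : X) := ObjectProperty.FullSubcategory (fun U : Clopens X => x ∈ U)

instance (X : Profinite.{u}) (x : X) : Category (Nbhds X x) := ObjectProperty.FullSubcategory.category _

/-- The diagram of values of `A` on the clopen neighbourhoods of `x`; the costalk of `A` at `x`
is its (inverse) limit. -/
def costalkDiagram {X : Profinite.{u}} (A : Clopens X ⥤ C) (x : X) : Nbhds X x ⥤ C :=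
  ObjectProperty.ι _ ⋙ A

/-- The costalk `A_x = lim_{V ∋ x} A(V)` of a precosheaf at a point. -/
noncomputable def costalk {X : Profinite.{u}} (A : Clopens X ⥤ C) (x : X)
    [HasLimit (costalkDiagram A x)] : C :=
  limit (costalkDiagram A x)

/-- `c` is *a* costalk of `A` at `x` if the costalk diagram of `A` at `x` admits a limit cone
whose point is isomorphic to `c`. -/
def IsCostalk {X : Profinite.{u}} (A : Clopens X ⥤ C) (x : X) (c : C) : Prop :=
  ∃ t : Cone (costalkDiagram A x), Nonempty (IsLimit t) ∧ Nonempty (t.pt ≅ c)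

/-- The pro-completion of a category: the free completion under cofiltered limits, realised
concretely as the opposite of the category of left-exact functors to `Type`. -/
def ProCompletion (E : Type u₁) [Category.{v₁} E] :=
  (ObjectProperty.FullSubcategory fun F : E ⥤ Type v₁ => Nonempty (PreservesFiniteLimits F))ᵒᵖ

instance (E : Type u₁) [Category.{v₁} E] : Category (ProCompletion E) :=
  inferInstanceAs (Category (ObjectProperty.FullSubcategory _)ᵒᵖ)

/-- The canonical (co-Yoneda) embedding of a category into its pro-completion. -/
def proEmbedding (E : Type u₁) [Category.{v₁} E] : E ⥤ ProCompletion E where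
  obj e := Opposite.op ⟨coyoneda.obj (Opposite.op e), ⟨inferInstance⟩⟩
  map {e e'} f := Quiver.Hom.op
    (show (⟨coyoneda.obj (Opposite.op e'), ⟨inferInstance⟩⟩ : ObjectProperty.FullSubcategory _) ⟶
        ⟨coyoneda.obj (Opposite.op e), ⟨inferInstance⟩⟩ from ObjectProperty.homMk (coyoneda.map f.op))

/-- A regular category: it has finite limits, coequalisers of kernel pairs, and regular
epimorphisms are stable under pullback. -/
class IsRegularCategory (C : Type u₂) [Category.{v₂} C] : Prop where
  hasFiniteLimits : HasFiniteLimits C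
  hasCoeqOfKernelPairs : ∀ {R X Y : C} (f : X ⟶ Y) (a b : R ⟶ X),
    IsPullback a b f f → HasCoequalizer a b
  regularEpi_stable : ∀ {P X Y Z : C} (f : X ⟶ Z) (g : Y ⟶ Z) (p₁ : P ⟶ X) (p₂ : P ⟶ Y),
    IsPullback p₁ p₂ f g → Nonempty (RegularEpi f) → Nonempty (RegularEpi p₂)

/-- `D` is closed under subobjects in its pro-completion: any subobject (in `Pro(D)`) of an
object of `D` is isomorphic to an object of `D`. -/
def ClosedUnderSubobjects (D : Type u) [SmallCategory D] : Prop :=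
  ∀ (d : D) (c : ProCompletion D) (m : c ⟶ (proEmbedding D).obj d), Mono m →
    ∃ d' : D, Nonempty (c ≅ (proEmbedding D).obj d')

/-- The coprojection maps into binary coproducts are monomorphisms. -/
def MonoCoprojections (C : Type u₂) [Category.{v₂} C] : Prop :=
  ∀ (a b p : C) (inl : a ⟶ p) (inr : b ⟶ p),
    Nonempty (IsColimit (BinaryCofan.mk inl inr)) → Mono inl ∧ Mono inr

/-- Cofiltered limits commute with finite colimits in `C`: for every finite category `J`,
the colimit functor `(J ⥤ C) ⥤ C` preserves cofiltered limits (of shapes of size `w`). -/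
def CofilteredLimitsCommuteWithFiniteColimits (C : Type u₂) [Category.{v₂} C]
    [HasFiniteColimits C] : Prop :=
  ∀ (J : Type) [SmallCategory J] [FinCategory J] (K : Type w) [SmallCategory K] [IsCofiltered K],
    PreservesLimitsOfShape K (colim (J := J) (C := C))

/-- The full subcategory of "finite objects" of `CoSh(Pro(D))`: cosheaves `(A, X)` with `X`
finite such that every costalk of `A` lies in (the image of) `D`. -/
def CoShFinProp (D : Type u) [SmallCategory D] (P : CoSh.{u} (ProCompletion D)) : Prop :=
  Finite (P.base : Type u) ∧
    ∀ x : P.base, ∃ d : D, IsCostalk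
      (ObjectProperty.FullSubcategory.obj
        (P := fun A : Clopens P.base ⥤ ProCompletion D => IsCosheaf A) P.fiber) x ((proEmbedding D).obj d)

/-- The category `CoSh(Pro(D))_fin` of finite cosheaf objects. -/
def CoShFin (D : Type u) [SmallCategory D] := ObjectProperty.FullSubcategory (CoShFinProp D)

instance (D : Type u) [SmallCategory D] : Category (CoShFin D) := ObjectProperty.FullSubcategory.category _

end ProfiniteCosheaves

namespace ProfiniteCosheaves

section Ptn

variable {Y : Type u} [TopologicalSpace Y]

attribute [local instance] Classical.propDecidable

noncomputable local instance : DecidableEq (Clopens Y) := Classical.decEq _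

/-- A finite clopen partition of a clopen set `U` into nonempty (nonbot) pieces. -/
structure Ptn (U : Clopens Y) : Type u where
  s : Finset (Clopens Y)
  nbot : ∀ x ∈ s, x ≠ ⊥
  disj : (s : Set (Clopens Y)).Pairwise Disjoint
  supEq : s.sup id = U

lemma Ptn.ext' {U : Clopens Y} {S T : Ptn U} (h : S.s = T.s) : S = T := by
  cases S; cases T; simpa using h

instance {U : Clopens Y} : Preorder (Ptn U) where
  le S T := ∀ x ∈ S.s, ∃ y ∈ T.s, x ≤ y
  le_refl S x hx := ⟨x, hx, le_rfl⟩
  le_trans S T P h1 h2 x hx := by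
    obtain ⟨y, hy, hxy⟩ := h1 x hx
    obtain ⟨z, hz, hyz⟩ := h2 y hy
    exact ⟨z, hz, hxy.trans hyz⟩

lemma Ptn.le_of_mem {U : Clopens Y} (S : Ptn U) {x : Clopens Y} (hx : x ∈ S.s) : x ≤ U :=
  S.supEq ▸ Finset.le_sup (f := id) hx

lemma Ptn.le_unique {U : Clopens Y} (T : Ptn U) {x y y' : Clopens Y} (hx : x ≠ ⊥)
    (hy : y ∈ T.s) (hy' : y' ∈ T.s) (h : x ≤ y) (h' : x ≤ y') : y = y' := by
  by_contra hne
  exact hx (le_bot_iff.mp (le_trans (le_inf h h') (disjoint_iff.mp (T.disj hy hy' hne)).le))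

open Classical in
/-- The trivial partition of `U`. -/
noncomputable def Ptn.full (U : Clopens Y) : Ptn U where
  s := if U = ⊥ then ∅ else {U}
  nbot x hx := by
    split at hx
    · simp at hx
    · simp only [Finset.mem_singleton] at hx; subst hx; assumption
  disj := by split <;> simp [Set.Pairwise]
  supEq := by split <;> simp [*]

instance {U : Clopens Y} : Nonempty (Ptn U) := ⟨Ptn.full U⟩

open Classical in
/-- Common refinement of two partitions. -/
noncomputable def Ptn.inter {U : Clopens Y} (S T : Ptn U) : Ptn U where
  s := ((S.s ×ˢ T.s).image fun p => p.1 ⊓ p.2).erase ⊥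
  nbot x hx := Finset.ne_of_mem_erase hx
  disj := by
    intro x hx y hy hne
    simp only [Finset.coe_erase, Set.mem_diff, Finset.coe_image, Set.mem_image] at hx hy
    obtain ⟨⟨⟨a, b⟩, hab, rfl⟩, -⟩ := hx
    obtain ⟨⟨⟨a', b'⟩, hab', rfl⟩, -⟩ := hy
    simp only [Finset.mem_coe, Finset.mem_product] at hab hab'
    by_cases haa : a = a'
    · subst haa
      have hbb : b ≠ b' := by rintro rfl; exact hne rfl
      exact Disjoint.mono inf_le_right inf_le_right (T.disj hab.2 hab'.2 hbb)
    · exact Disjoint.mono inf_le_left inf_le_left (S.disj hab.1 hab'.1 haa)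
  supEq := by
    rw [Finset.sup_erase_bot, Finset.sup_image]
    have h1 : ((S.s ×ˢ T.s).sup fun p => id (p.1 ⊓ p.2)) = S.s.sup fun a => T.s.sup fun b => a ⊓ b :=
      Finset.sup_product_left _ _ _
    have : (id ∘ fun (p : Clopens Y × Clopens Y) => p.1 ⊓ p.2) = fun p => id (p.1 ⊓ p.2) := rfl
    rw [this, h1]
    have h2 : ∀ a ∈ S.s, (T.s.sup fun b => a ⊓ b) = a := by
      intro a ha
      rw [← Finset.sup_inf_distrib_left]
      have : T.s.sup (fun b => b) = U := T.supEq
      rw [this, inf_eq_left.mpr (S.le_of_mem ha)]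
    rw [Finset.sup_congr rfl h2]
    exact S.supEq

lemma Ptn.inter_le_left {U : Clopens Y} (S T : Ptn U) : S.inter T ≤ S := by
  intro x hx
  have hx' := Finset.mem_of_mem_erase hx
  simp only [Finset.mem_image, Finset.mem_product] at hx'
  obtain ⟨⟨a, b⟩, ⟨ha, hb⟩, rfl⟩ := hx'
  exact ⟨a, ha, inf_le_left⟩

lemma Ptn.inter_le_right {U : Clopens Y} (S T : Ptn U) : S.inter T ≤ T := by
  intro x hx
  have hx' := Finset.mem_of_mem_erase hx
  simp only [Finset.mem_image, Finset.mem_product] at hx'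
  obtain ⟨⟨a, b⟩, ⟨ha, hb⟩, rfl⟩ := hx'
  exact ⟨b, hb, inf_le_right⟩

instance {U : Clopens Y} : IsDirected (Ptn U) (· ≥ ·) :=
  ⟨fun S T => ⟨S.inter T, Ptn.inter_le_left S T, Ptn.inter_le_right S T⟩⟩

example (U : Clopens Y) : IsCofiltered (Ptn U) := inferInstance

open Classical in
/-- Restriction of a partition of `V` to a smaller clopen `U`. -/
noncomputable def Ptn.res {U V : Clopens Y} (T : Ptn V) (hUV : U ≤ V) : Ptn U where
  s := (T.s.image fun y => y ⊓ U).erase ⊥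
  nbot x hx := Finset.ne_of_mem_erase hx
  disj := by
    intro x hx y hy hne
    simp only [Finset.coe_erase, Set.mem_diff, Finset.coe_image, Set.mem_image] at hx hy
    obtain ⟨⟨a, ha, rfl⟩, -⟩ := hx
    obtain ⟨⟨b, hb, rfl⟩, -⟩ := hy
    have hab : a ≠ b := by rintro rfl; exact hne rfl
    exact Disjoint.mono inf_le_left inf_le_left (T.disj (by simpa using ha) (by simpa using hb) hab)
  supEq := by
    rw [Finset.sup_erase_bot, Finset.sup_image]
    have h1 : (T.s.sup fun y => id y ⊓ U) = T.s.sup id ⊓ U := (Finset.sup_inf_distrib_right _ _ _).symm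
    have : (id ∘ fun (y : Clopens Y) => y ⊓ U) = fun y => id y ⊓ U := rfl
    rw [this, h1, T.supEq, inf_eq_right.mpr hUV]

lemma Ptn.res_le {U V : Clopens Y} (T : Ptn V) (hUV : U ≤ V) :
    ∀ x ∈ (T.res hUV).s, ∃ y ∈ T.s, x ≤ y := by
  intro x hx
  have hx' := Finset.mem_of_mem_erase hx
  simp only [Finset.mem_image] at hx'
  obtain ⟨a, ha, rfl⟩ := hx'
  exact ⟨a, ha, inf_le_left⟩

end Ptn

section Transfer
variable {Y : Type u} [TopologicalSpace Y] {C : Type u₂} [Category.{u} C] [HasFiniteColimits C]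

variable (A B : Clopens Y ⥤ C)

/-- The coproduct of values of `A` on the pieces of a partition. -/
noncomputable abbrev pieces {U : Clopens Y} (S : Ptn U) : C := ∐ fun x : S.s => A.obj x.1

/-- The map between piece-coproducts induced by a refinement. -/
noncomputable def transfer {U V : Clopens Y} (S : Ptn U) (T : Ptn V)
    (h : ∀ x ∈ S.s, ∃ y ∈ T.s, x ≤ y) : pieces A S ⟶ pieces A T :=
  Sigma.desc fun x =>
    A.map (homOfLE (h x.1 x.2).choose_spec.2) ≫
      Sigma.ι (fun y : T.s => A.obj y.1) ⟨(h x.1 x.2).choose, (h x.1 x.2).choose_spec.1⟩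

lemma ι_transfer {U V : Clopens Y} (S : Ptn U) (T : Ptn V) (h : ∀ x ∈ S.s, ∃ y ∈ T.s, x ≤ y)
    (x : S.s) {y : Clopens Y} (hy : y ∈ T.s) (hxy : x.1 ≤ y) :
    Sigma.ι (fun x : S.s => A.obj x.1) x ≫ transfer A S T h =
      A.map (homOfLE hxy) ≫ Sigma.ι (fun y : T.s => A.obj y.1) ⟨y, hy⟩ := by
  have hc := (h x.1 x.2).choose_spec
  have he : (h x.1 x.2).choose = y :=
    T.le_unique (S.nbot x.1 x.2) hc.1 hy hc.2 hxy
  subst he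
  simp [transfer]

lemma transfer_transfer {U V W : Clopens Y} (S : Ptn U) (T : Ptn V) (P : Ptn W)
    (h1 : ∀ x ∈ S.s, ∃ y ∈ T.s, x ≤ y) (h2 : ∀ x ∈ T.s, ∃ y ∈ P.s, x ≤ y)
    (h3 : ∀ x ∈ S.s, ∃ y ∈ P.s, x ≤ y) :
    transfer A S T h1 ≫ transfer A T P h2 = transfer A S P h3 := by
  apply Sigma.hom_ext
  intro x
  obtain ⟨y, hy, hxy⟩ := h1 x.1 x.2
  obtain ⟨z, hz, hyz⟩ := h2 y hy
  rw [← Category.assoc, ι_transfer A S T h1 x hy hxy, Category.assoc,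
    ι_transfer A T P h2 ⟨y, hy⟩ hz hyz, ι_transfer A S P h3 x hz (hxy.trans hyz),
    ← Category.assoc, ← A.map_comp]
  rfl

lemma transfer_id {U : Clopens Y} (S : Ptn U) (h : ∀ x ∈ S.s, ∃ y ∈ S.s, x ≤ y) :
    transfer A S S h = 𝟙 _ := by
  apply Sigma.hom_ext
  intro x
  rw [ι_transfer A S S h x x.2 le_rfl]
  simp

/-- Map from the piece-coproduct to the value on any enclosing clopen. -/
noncomputable def toObj {U V : Clopens Y} (S : Ptn U) (h : ∀ x ∈ S.s, x ≤ V) :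
    pieces A S ⟶ A.obj V :=
  Sigma.desc fun x => A.map (homOfLE (h x.1 x.2))

lemma transfer_toObj {U V W : Clopens Y} (S : Ptn U) (T : Ptn V)
    (h1 : ∀ x ∈ S.s, ∃ y ∈ T.s, x ≤ y) (h2 : ∀ x ∈ T.s, x ≤ W) (h3 : ∀ x ∈ S.s, x ≤ W) :
    transfer A S T h1 ≫ toObj A T h2 = toObj A S h3 := by
  apply Sigma.hom_ext
  intro x
  obtain ⟨y, hy, hxy⟩ := h1 x.1 x.2
  rw [← Category.assoc, ι_transfer A S T h1 x hy hxy]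
  simp only [toObj, Category.assoc, colimit.ι_desc, Cofan.mk_ι_app, ← A.map_comp]
  rfl

lemma toObj_map {U V W : Clopens Y} (S : Ptn U) (h1 : ∀ x ∈ S.s, x ≤ V) (h2 : V ≤ W)
    (h3 : ∀ x ∈ S.s, x ≤ W) :
    toObj A S h1 ≫ A.map (homOfLE h2) = toObj A S h3 := by
  apply Sigma.hom_ext
  intro x
  simp only [toObj, colimit.ι_desc, Cofan.mk_ι_app, ← Category.assoc, ← A.map_comp]
  rfl

lemma toObj_comp_ι {V U : Clopens Y} (S : Ptn V) (T : Ptn U) (hVT : V ∈ T.s)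
    (h : ∀ z ∈ S.s, z ≤ V) :
    toObj A S h ≫ Sigma.ι (fun y : T.s => A.obj y.1) ⟨V, hVT⟩ =
      transfer A S T (fun z hz => ⟨V, hVT, h z hz⟩) := by
  apply Sigma.hom_ext
  intro x
  rw [ι_transfer A S T _ x hVT (h x.1 x.2)]
  simp [toObj]

/-- Naturality of transfer in the precosheaf. -/
lemma transfer_map {U V : Clopens Y} (φ : A ⟶ B) (S : Ptn U) (T : Ptn V)
    (h : ∀ x ∈ S.s, ∃ y ∈ T.s, x ≤ y) :
    transfer A S T h ≫ Limits.Sigma.map (fun y : T.s => φ.app y.1) =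
      Limits.Sigma.map (fun x : S.s => φ.app x.1) ≫ transfer B S T h := by
  apply Sigma.hom_ext
  intro x
  obtain ⟨y, hy, hxy⟩ := h x.1 x.2
  have h1 : Sigma.ι (fun x : S.s => A.obj x.1) x ≫ Limits.Sigma.map (fun x : S.s => φ.app x.1) =
      φ.app x.1 ≫ Sigma.ι (fun x : S.s => B.obj x.1) x := by simp
  have h2 : Sigma.ι (fun y : T.s => A.obj y.1) ⟨y, hy⟩ ≫
        Limits.Sigma.map (fun y : T.s => φ.app y.1) =
      φ.app y ≫ Sigma.ι (fun y : T.s => B.obj y.1) ⟨y, hy⟩ := by simp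
  rw [← Category.assoc, ι_transfer A S T h x hy hxy, Category.assoc, h2, ← Category.assoc,
    φ.naturality, Category.assoc, ← ι_transfer B S T h x hy hxy, ← Category.assoc, ← h1,
    Category.assoc]

lemma toObj_map_nat {U V : Clopens Y} (φ : A ⟶ B) (S : Ptn U) (h : ∀ x ∈ S.s, x ≤ V) :
    Limits.Sigma.map (fun x : S.s => φ.app x.1) ≫ toObj B S h = toObj A S h ≫ φ.app V := by
  apply Sigma.hom_ext
  intro x
  simp [toObj, φ.naturality]

/-- The cofiltered diagram of piece-coproducts over all partitions of `U`. -/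
@[reducible] noncomputable def diag (U : Clopens Y) : Ptn U ⥤ C where
  obj S := pieces A S
  map {S T} f := transfer A S T (leOfHom f)
  map_id S := transfer_id A S (le_refl S)
  map_comp {S T P} f g :=
    (transfer_transfer A S T P (leOfHom f) (leOfHom g) (leOfHom (f ≫ g))).symm

end Transfer
section Sheafify
variable {Y : Type u} [TopologicalSpace Y] {C : Type u₂} [Category.{u} C]
  [HasFiniteColimits C] [HasLimits C]

variable (A B : Clopens Y ⥤ C)

lemma π_transfer_indep {U W : Clopens Y} (S S' : Ptn U) (T : Ptn W)
    (h1 : ∀ x ∈ S.s, ∃ y ∈ T.s, x ≤ y) (h2 : ∀ x ∈ S'.s, ∃ y ∈ T.s, x ≤ y) :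
    limit.π (diag A U) S ≫ transfer A S T h1 = limit.π (diag A U) S' ≫ transfer A S' T h2 := by
  have e1 : limit.π (diag A U) (S.inter S') ≫ transfer A (S.inter S') S (S.inter_le_left S') =
      limit.π (diag A U) S := limit.w (diag A U) (homOfLE (S.inter_le_left S'))
  have e2 : limit.π (diag A U) (S.inter S') ≫ transfer A (S.inter S') S' (S.inter_le_right S') =
      limit.π (diag A U) S' := limit.w (diag A U) (homOfLE (S.inter_le_right S'))
  have h3 : ∀ x ∈ (S.inter S').s, ∃ y ∈ T.s, x ≤ y := by
    intro x hx
    obtain ⟨y, hy, hxy⟩ := S.inter_le_left S' x hx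
    obtain ⟨z, hz, hyz⟩ := h1 y hy
    exact ⟨z, hz, hxy.trans hyz⟩
  erw [← e1, ← e2, Category.assoc, Category.assoc,
    transfer_transfer A _ S T _ h1 h3, transfer_transfer A _ S' T _ h2 h3]

lemma π_toObj_indep {U V : Clopens Y} (S S' : Ptn U)
    (h1 : ∀ x ∈ S.s, x ≤ V) (h2 : ∀ x ∈ S'.s, x ≤ V) :
    limit.π (diag A U) S ≫ toObj A S h1 = limit.π (diag A U) S' ≫ toObj A S' h2 := by
  have e1 : limit.π (diag A U) (S.inter S') ≫ transfer A (S.inter S') S (S.inter_le_left S') =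
      limit.π (diag A U) S := limit.w (diag A U) (homOfLE (S.inter_le_left S'))
  have e2 : limit.π (diag A U) (S.inter S') ≫ transfer A (S.inter S') S' (S.inter_le_right S') =
      limit.π (diag A U) S' := limit.w (diag A U) (homOfLE (S.inter_le_right S'))
  have h3 : ∀ x ∈ (S.inter S').s, x ≤ V := by
    intro x hx
    obtain ⟨y, hy, hxy⟩ := S.inter_le_left S' x hx
    exact hxy.trans (h1 y hy)
  erw [← e1, ← e2, Category.assoc, Category.assoc,
    transfer_toObj A (S.inter S') S (S.inter_le_left S') h1 h3,
    transfer_toObj A (S.inter S') S' (S.inter_le_right S') h2 h3]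

/-- The cone used to define functoriality of the cosheafification. -/
@[reducible] noncomputable def resCone {U V : Clopens Y} (h : U ≤ V) : Cone (diag A V) where
  pt := limit (diag A U)
  π :=
    { app := fun T => limit.π (diag A U) (T.res h) ≫ transfer A (T.res h) T (T.res_le h)
      naturality := fun T T' f => by
        dsimp only [Functor.const_obj_obj, Functor.const_obj_map, diag]
        rw [Category.id_comp, Category.assoc]
        have h3 : ∀ x ∈ (T.res h).s, ∃ y ∈ T'.s, x ≤ y := by
          intro x hx
          obtain ⟨y, hy, hxy⟩ := T.res_le h x hx
          obtain ⟨z, hz, hyz⟩ := leOfHom f y hy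
          exact ⟨z, hz, hxy.trans hyz⟩
        rw [transfer_transfer A _ T T' _ (leOfHom f) h3]
        exact (π_transfer_indep A (T'.res h) (T.res h) T' (T'.res_le h) h3) }

/-- The explicit cosheafification of a precosheaf. -/
@[reducible] noncomputable def sheafifyObj : Clopens Y ⥤ C where
  obj U := limit (diag A U)
  map {U V} f := limit.lift (diag A V) (resCone A (leOfHom f))
  map_id U := by
    apply limit.hom_ext
    intro T
    erw [limit.lift_π, Category.id_comp]
    dsimp [resCone]
    rw [π_transfer_indep A (T.res (le_refl U)) T T (T.res_le _) (le_refl T),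
      transfer_id A T (le_refl T)]
    exact Category.comp_id _
  map_comp {U V W} f g := by
    apply limit.hom_ext
    intro T
    simp only [limit.lift_π, Category.assoc]
    dsimp only [resCone]
    rw [← Category.assoc, limit.lift_π]
    dsimp only [resCone]
    rw [Category.assoc, transfer_transfer A ((T.res (leOfHom g)).res (leOfHom f))
      (T.res (leOfHom g)) T ((T.res (leOfHom g)).res_le (leOfHom f)) (T.res_le (leOfHom g))
      (fun x hx => by
        obtain ⟨y, hy, hxy⟩ := (T.res (leOfHom g)).res_le (leOfHom f) x hx
        obtain ⟨z, hz, hyz⟩ := T.res_le (leOfHom g) y hy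
        exact ⟨z, hz, hxy.trans hyz⟩)]
    exact π_transfer_indep A (T.res (leOfHom (f ≫ g)))
      ((T.res (leOfHom g)).res (leOfHom f)) T (T.res_le (leOfHom (f ≫ g))) _

lemma sheafifyObj_map_π {U V : Clopens Y} (f : U ⟶ V) (T : Ptn V) :
    (sheafifyObj A).map f ≫ limit.π (diag A V) T =
      limit.π (diag A U) (T.res (leOfHom f)) ≫
        transfer A (T.res (leOfHom f)) T (T.res_le (leOfHom f)) := by
  apply limit.lift_π

/-- The counit of cosheafification at `A`. -/
noncomputable def epsApp : sheafifyObj A ⟶ A where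
  app U := limit.π (diag A U) (Ptn.full U) ≫ toObj A (Ptn.full U) (fun x hx => Ptn.le_of_mem _ hx)
  naturality {U V} f := by
    have h' : ∀ x ∈ ((Ptn.full V).res (leOfHom f)).s, x ≤ V :=
      fun x hx => (((Ptn.full V).res (leOfHom f)).le_of_mem hx).trans (leOfHom f)
    have h'' : ∀ x ∈ (Ptn.full U).s, x ≤ V :=
      fun x hx => (Ptn.le_of_mem _ hx).trans (leOfHom f)
    erw [← Category.assoc, sheafifyObj_map_π A f (Ptn.full V), Category.assoc,
      transfer_toObj A ((Ptn.full V).res (leOfHom f)) (Ptn.full V)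
        ((Ptn.full V).res_le (leOfHom f)) (fun x hx => Ptn.le_of_mem _ hx) h',
      π_toObj_indep A ((Ptn.full V).res (leOfHom f)) (Ptn.full U) h' h'',
      ← toObj_map A (Ptn.full U) (fun x hx => Ptn.le_of_mem _ hx) (leOfHom f) h'',
      ← Category.assoc]
    rfl

/-- Functoriality of the partition diagram in the precosheaf. -/
noncomputable def diagMap (φ : A ⟶ B) (U : Clopens Y) : diag A U ⟶ diag B U where
  app S := Limits.Sigma.map (fun x : S.s => φ.app x.1)
  naturality S T f := transfer_map A B φ S T (leOfHom f)

/-- Functoriality of cosheafification. -/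
noncomputable def sheafifyMap (φ : A ⟶ B) : sheafifyObj A ⟶ sheafifyObj B where
  app U := limMap (diagMap A B φ U)
  naturality {U V} f := by
    apply limit.hom_ext
    intro T
    conv_lhs => erw [Category.assoc, limMap_π, ← Category.assoc, sheafifyObj_map_π A f T,
      Category.assoc]
    conv_rhs => rw [Category.assoc, sheafifyObj_map_π B f T, ← Category.assoc, limMap_π,
      Category.assoc]
    dsimp only [diagMap]
    rw [transfer_map A B φ (T.res (leOfHom f)) T (T.res_le (leOfHom f))]

lemma sheafifyObj_map_π' {U V : Clopens Y} (f : U ⟶ V) (T : Ptn V) (S : Ptn U)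
    (hS : ∀ x ∈ S.s, ∃ y ∈ T.s, x ≤ y) :
    (sheafifyObj A).map f ≫ limit.π (diag A V) T =
      limit.π (diag A U) S ≫ transfer A S T hS := by
  rw [sheafifyObj_map_π A f T]
  exact π_transfer_indep A (T.res (leOfHom f)) S T (T.res_le (leOfHom f)) hS

end Sheafify

section SheafifyF
variable {Y : Type u} [TopologicalSpace Y] {C : Type u₂} [Category.{u} C]
  [HasFiniteColimits C] [HasLimits C]

attribute [local instance] Classical.propDecidable

noncomputable local instance : DecidableEq (Clopens Y) := Classical.decEq _

/-- Cosheafification as an endofunctor on precosheaves. -/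
noncomputable def sheafifyF : (Clopens Y ⥤ C) ⥤ (Clopens Y ⥤ C) where
  obj A := sheafifyObj A
  map {A B} φ := sheafifyMap A B φ
  map_id A := by
    ext U S
    dsimp only [sheafifyMap]
    erw [limMap_π]
    dsimp only [diagMap]
    have : (Limits.Sigma.map fun x : S.s => NatTrans.app (𝟙 A) x.1) = 𝟙 (pieces A S) := by
      apply Sigma.hom_ext
      intro x
      simp
    rw [this]
    exact (Category.comp_id _).trans (Category.id_comp _).symm
  map_comp {A B D} φ ψ := by
    ext U S
    dsimp only [sheafifyMap]
    simp only [NatTrans.comp_app, Category.assoc, limMap_π]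
    erw [← Category.assoc, limMap_π, Category.assoc]
    dsimp only [diagMap]
    have : (Limits.Sigma.map fun x : S.s => NatTrans.app (φ ≫ ψ) x.1) =
        (Limits.Sigma.map fun x : S.s => φ.app x.1) ≫
          (Limits.Sigma.map fun x : S.s => ψ.app x.1) := by
      apply Sigma.hom_ext
      intro x
      simp
    rw [this]

/-- The counit of cosheafification. -/
noncomputable def eps : (sheafifyF : (Clopens Y ⥤ C) ⥤ _) ⟶ 𝟭 _ where
  app A := epsApp A
  naturality {A B} φ := by
    ext U
    dsimp only [sheafifyF, Functor.id_map, NatTrans.comp_app, epsApp, sheafifyMap]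
    erw [← Category.assoc, limMap_π, Category.assoc]
    dsimp only [diagMap]
    rw [toObj_map_nat A B φ (Ptn.full U) (fun x hx => Ptn.le_of_mem _ hx), ← Category.assoc]

/-- The index category of partitions of `⊥` has a unique object. -/
instance : Unique (Ptn (⊥ : Clopens Y)) where
  default := ⟨∅, by simp, by simp [Set.Pairwise], by simp⟩
  uniq S := by
    apply Ptn.ext'
    have : S.s = ∅ := by
      rw [Finset.eq_empty_iff_forall_notMem]
      intro x hx
      exact S.nbot x hx (le_bot_iff.mp (S.le_of_mem hx))
    simp [this]

/-- An empty coproduct is initial. -/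
noncomputable def isInitialPieces {U : Clopens Y} (A : Clopens Y ⥤ C) (S : Ptn U)
    (hS : S.s = ∅) : IsInitial (pieces A S) := by
  have he : IsEmpty (↥S.s) := ⟨fun x => Finset.eq_empty_iff_forall_notMem.mp hS _ x.2⟩
  apply IsInitial.ofUniqueHom (fun Z => Sigma.desc fun x => he.elim x)
  intro Z m
  apply Sigma.hom_ext
  intro x
  exact he.elim x

/-- The value of the cosheafification at `⊥` is initial. -/
noncomputable def sheafifyIsInitialBot (A : Clopens Y ⥤ C) :
    IsInitial ((sheafifyObj A).obj (⊥ : Clopens Y)) := by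
  have hde : IsInitial (default : Ptn (⊥ : Clopens Y)) := by
    apply IsInitial.ofUniqueHom (fun T => homOfLE (le_of_eq (Unique.eq_default T).symm))
    intro T m
    apply Subsingleton.elim
  have hS : (default : Ptn (⊥ : Clopens Y)).s = ∅ := by
    rw [Finset.eq_empty_iff_forall_notMem]
    intro x hx
    exact (default : Ptn (⊥ : Clopens Y)).nbot x hx (le_bot_iff.mp (Ptn.le_of_mem _ hx))
  exact IsInitial.ofIso (isInitialPieces A default hS)
    (limit.isoLimitCone ⟨_, limitOfDiagramInitial hde (diag A ⊥)⟩).symm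

section Decomp
variable {B : Clopens Y ⥤ C}

/-- Splitting off one summand of a coproduct over `insert a t`. -/
noncomputable def insertIso (B : Clopens Y ⥤ C) (a : Clopens Y) (t : Finset (Clopens Y))
    (ha : a ∉ t) :
    (∐ fun x : ↥(insert a t) => B.obj x.1) ≅ B.obj a ⨿ (∐ fun x : ↥t => B.obj x.1) := by
  classical
  refine
    { hom := Sigma.desc fun x =>
        if h : x.1 ∈ t then Sigma.ι (fun x : ↥t => B.obj x.1) ⟨x.1, h⟩ ≫ coprod.inr
        else eqToHom (congrArg B.obj (by
          rcases Finset.mem_insert.mp x.2 with h' | h'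
          · exact h'
          · exact absurd h' h)) ≫ coprod.inl
      inv := coprod.desc (Sigma.ι (fun x : ↥(insert a t) => B.obj x.1) ⟨a, Finset.mem_insert_self a t⟩)
        (Sigma.desc fun x => Sigma.ι (fun x : ↥(insert a t) => B.obj x.1)
          ⟨x.1, Finset.mem_insert_of_mem x.2⟩)
      hom_inv_id := ?_
      inv_hom_id := ?_ }
  · apply Sigma.hom_ext
    rintro ⟨x, hx⟩
    by_cases h : x ∈ t
    · simp [h, coprod.inl_desc, coprod.inr_desc, coprod.inl_desc_assoc, coprod.inr_desc_assoc]
    · have hxa : x = a := by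
        rcases Finset.mem_insert.mp hx with h' | h'
        · exact h'
        · exact absurd h' h
      subst hxa
      simp [h, coprod.inl_desc, coprod.inr_desc, coprod.inl_desc_assoc, coprod.inr_desc_assoc]
  · apply coprod.hom_ext
    · simp [ha, coprod.inl_desc, coprod.inr_desc, coprod.inl_desc_assoc, coprod.inr_desc_assoc]
    · rw [← Category.assoc, coprod.inr_desc]
      apply Sigma.hom_ext
      rintro ⟨x, hx⟩
      rw [← Category.assoc, colimit.ι_desc]
      simp [hx, coprod.inl_desc, coprod.inr_desc, coprod.inl_desc_assoc, coprod.inr_desc_assoc]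

/-- For a cosheaf, the canonical map from the piece-coproduct of any partition is an
isomorphism (finite additivity). -/
lemma isIso_toObj_aux (hB : IsCosheaf B) (s : Finset (Clopens Y)) :
    ∀ (V : Clopens Y), (∀ x ∈ s, x ≠ ⊥) → ((s : Set (Clopens Y)).Pairwise Disjoint) →
      s.sup id = V → ∀ (h : ∀ x : ↥s, x.1 ≤ V),
      IsIso (Sigma.desc (fun x : ↥s => B.map (homOfLE (h x))) : _ ⟶ B.obj V) := by
  classical
  induction s using Finset.induction_on with
  | empty =>
    intro V hnb hd hsup h
    obtain rfl : (⊥ : Clopens Y) = V := by simpa using hsup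
    obtain ⟨hi⟩ := hB.initial
    refine ⟨hi.to _, ?_, hi.hom_ext _ _⟩
    apply Sigma.hom_ext
    rintro ⟨x, hx⟩
    simp at hx
  | @insert a t ha ih =>
    intro V hnb hd hsup h
    rw [Finset.sup_insert] at hsup
    obtain rfl : id a ⊔ t.sup id = V := hsup
    have hnb' : ∀ x ∈ t, x ≠ ⊥ := fun x hx => hnb x (Finset.mem_insert_of_mem hx)
    have hd' : ((t : Set (Clopens Y))).Pairwise Disjoint :=
      hd.mono (fun x hx => by
        simp only [Finset.coe_insert, Set.mem_insert_iff]
        exact Or.inr hx)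
    have hdisj : Disjoint a (t.sup id) := by
      rw [Finset.disjoint_sup_right]
      intro b hb
      exact hd (Finset.mem_insert_self a t) (Finset.mem_insert_of_mem hb)
        (fun hab => ha (hab ▸ hb))
    haveI prev := ih (t.sup id) hnb' hd' rfl (fun x => Finset.le_sup (f := id) x.2)
    obtain ⟨hc⟩ := hB.binary a (t.sup id) hdisj
    have hbin : IsIso (coprod.desc (B.map (homOfLE le_sup_left)) (B.map (homOfLE le_sup_right))
        : B.obj a ⨿ B.obj (t.sup id) ⟶ B.obj (id a ⊔ t.sup id)) := by
      have : coprod.desc (B.map (homOfLE le_sup_left)) (B.map (homOfLE le_sup_right)) =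
          (colimit.isoColimitCocone ⟨cosheafCofan B a (t.sup id), hc⟩).hom := by
        apply coprod.hom_ext
        · simp only [coprod.inl_desc]
          exact (colimit.isoColimitCocone_ι_hom ⟨cosheafCofan B a (t.sup id), hc⟩ ⟨WalkingPair.left⟩).symm
        · simp only [coprod.inr_desc]
          exact (colimit.isoColimitCocone_ι_hom ⟨cosheafCofan B a (t.sup id), hc⟩ ⟨WalkingPair.right⟩).symm
      rw [this]
      exact Iso.isIso_hom _
    have key : (Sigma.desc (fun x : ↥(insert a t) => B.map (homOfLE (h x))) : _ ⟶ _) =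
        (insertIso B a t ha).hom ≫
          (coprod.mapIso (Iso.refl (B.obj a)) (@asIso _ _ _ _ _ prev)).hom ≫
          coprod.desc (B.map (homOfLE le_sup_left)) (B.map (homOfLE le_sup_right)) := by
      apply Sigma.hom_ext
      rintro ⟨x, hx⟩
      by_cases hxt : x ∈ t
      · rw [colimit.ι_desc, ← Category.assoc]
        dsimp only [insertIso]
        rw [colimit.ι_desc]
        dsimp
        rw [dif_pos hxt]
        simp [← B.map_comp, coprod.inl_desc, coprod.inr_desc, coprod.inl_desc_assoc, coprod.inr_desc_assoc]
      · have hxa : x = a := by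
          rcases Finset.mem_insert.mp hx with h' | h'
          · exact h'
          · exact absurd h' hxt
        subst hxa
        rw [colimit.ι_desc, ← Category.assoc]
        dsimp only [insertIso]
        rw [colimit.ι_desc]
        dsimp
        rw [dif_neg hxt]
        simp [coprod.inl_desc, coprod.inr_desc, coprod.inl_desc_assoc, coprod.inr_desc_assoc]
    rw [key]
    infer_instance

lemma isIso_toObj (hB : IsCosheaf B) {U : Clopens Y} (S : Ptn U)
    (h : ∀ x ∈ S.s, x ≤ U) : IsIso (toObj B S h) := by
  obtain ⟨s, h1, h2, rfl⟩ := S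
  exact isIso_toObj_aux hB s _ h1 h2 rfl _

end Decomp
end SheafifyF

section Binary

attribute [local instance] Classical.propDecidable

/-- A functor from a cofiltered category to a thin category is initial as soon as every object
admits a map from some image object. -/
lemma initial_of_cofiltered {K : Type*} {P : Type*} [Category K] [Category P] [IsCofiltered K]
    [Quiver.IsThin P] (F : K ⥤ P) (h : ∀ p : P, ∃ k : K, Nonempty (F.obj k ⟶ p)) :
    F.Initial := by
  constructor
  intro p
  obtain ⟨k0, ⟨f0⟩⟩ := h p
  haveI : Nonempty (CostructuredArrow F p) := ⟨CostructuredArrow.mk f0⟩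
  apply zigzag_isConnected
  intro a b
  let c : CostructuredArrow F p :=
    CostructuredArrow.mk (F.map (IsCofiltered.minToLeft a.left b.left) ≫ a.hom)
  have f1 : c ⟶ a := CostructuredArrow.homMk (IsCofiltered.minToLeft a.left b.left)
    (Subsingleton.elim _ _)
  have f2 : c ⟶ b := CostructuredArrow.homMk (IsCofiltered.minToRight a.left b.left)
    (Subsingleton.elim _ _)
  exact Relation.ReflTransGen.head (Or.inr ⟨f1⟩) (Relation.ReflTransGen.single (Or.inl ⟨f2⟩))

variable {Y : Type u} [TopologicalSpace Y]

noncomputable local instance : DecidableEq (Clopens Y) := Classical.decEq _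

instance {U : Clopens Y} : Quiver.IsThin (Ptn U) := fun _ _ => inferInstance

/-- The union of a partition of `U` and a partition of `V`, for `U, V` disjoint. -/
noncomputable def unionPtn {U V : Clopens Y} (hUV : Disjoint U V) (S : Ptn U) (T : Ptn V) :
    Ptn (U ⊔ V) where
  s := S.s ∪ T.s
  nbot x hx := by
    rcases Finset.mem_union.mp hx with h | h
    exacts [S.nbot x h, T.nbot x h]
  disj := by
    intro x hx y hy hne
    rw [Finset.coe_union] at hx hy
    rcases (Set.mem_union _ _ _).mp hx with hx | hx <;>
      rcases (Set.mem_union _ _ _).mp hy with hy | hy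
    · exact S.disj hx hy hne
    · exact hUV.mono (S.le_of_mem hx) (T.le_of_mem hy)
    · exact (hUV.mono (S.le_of_mem hy) (T.le_of_mem hx)).symm
    · exact T.disj hx hy hne
  supEq := by rw [Finset.sup_union, S.supEq, T.supEq]

lemma unionPtn_left_le {U V : Clopens Y} (hUV : Disjoint U V) (S : Ptn U) (T : Ptn V) :
    ∀ x ∈ S.s, ∃ y ∈ (unionPtn hUV S T).s, x ≤ y :=
  fun x hx => ⟨x, Finset.mem_union_left _ hx, le_rfl⟩

lemma unionPtn_right_le {U V : Clopens Y} (hUV : Disjoint U V) (S : Ptn U) (T : Ptn V) :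
    ∀ x ∈ T.s, ∃ y ∈ (unionPtn hUV S T).s, x ≤ y :=
  fun x hx => ⟨x, Finset.mem_union_right _ hx, le_rfl⟩

lemma unionPtn_not_mem_left {U V : Clopens Y} (hUV : Disjoint U V) {S : Ptn U} {T : Ptn V}
    {x : Clopens Y} (hx : x ∈ T.s) : x ∉ S.s := by
  intro hxS
  exact T.nbot x hx (le_bot_iff.mp (le_trans (le_inf (S.le_of_mem hxS) (T.le_of_mem hx))
    (disjoint_iff.mp hUV).le))

/-- Union of partitions, as a functor. -/
noncomputable def unionFun {U V : Clopens Y} (hUV : Disjoint U V) :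
    Ptn U × Ptn V ⥤ Ptn (U ⊔ V) where
  obj p := unionPtn hUV p.1 p.2
  map {p q} f := homOfLE (by
    intro x hx
    rcases Finset.mem_union.mp hx with h | h
    · obtain ⟨y, hy, hxy⟩ := leOfHom f.1 x h
      exact ⟨y, Finset.mem_union_left _ hy, hxy⟩
    · obtain ⟨y, hy, hxy⟩ := leOfHom f.2 x h
      exact ⟨y, Finset.mem_union_right _ hy, hxy⟩)
  map_id p := Subsingleton.elim _ _
  map_comp f g := Subsingleton.elim _ _

lemma unionFun_initial {U V : Clopens Y} (hUV : Disjoint U V) : (unionFun hUV).Initial := by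
  apply initial_of_cofiltered
  intro P
  refine ⟨(P.res le_sup_left, P.res le_sup_right), ⟨homOfLE ?_⟩⟩
  intro x hx
  rcases Finset.mem_union.mp hx with h | h
  · exact P.res_le le_sup_left x h
  · exact P.res_le le_sup_right x h

variable {C : Type u₂} [Category.{u} C] [HasFiniteColimits C] [HasLimits C]

/-- The two-parameter diagram of pairs of piece-coproducts. -/
noncomputable def pairDiag (A : Clopens Y ⥤ C) (U V : Clopens Y) :
    Ptn U × Ptn V ⥤ Discrete WalkingPair ⥤ C where
  obj p := pair (pieces A p.1) (pieces A p.2)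
  map {p q} f := mapPair ((diag A U).map f.1) ((diag A V).map f.2)
  map_id p := by
    apply NatTrans.ext
    funext ⟨j⟩
    cases j
    · exact (diag A U).map_id _
    · exact (diag A V).map_id _
  map_comp f g := by
    apply NatTrans.ext
    funext ⟨j⟩
    cases j
    · exact (diag A U).map_comp f.1 g.1
    · exact (diag A V).map_comp f.2 g.2

/-- The coproduct of piece-coproducts of two disjoint partitions is the piece-coproduct of
their union. -/
noncomputable def unionIso (A : Clopens Y ⥤ C) {U V : Clopens Y} (hUV : Disjoint U V)
    (S : Ptn U) (T : Ptn V) :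
    (pieces A S ⨿ pieces A T) ≅ pieces A (unionPtn hUV S T) := by
  classical
  refine
    { hom := coprod.desc (transfer A S (unionPtn hUV S T) (unionPtn_left_le hUV S T))
        (transfer A T (unionPtn hUV S T) (unionPtn_right_le hUV S T))
      inv := Sigma.desc fun x =>
        if h : x.1 ∈ S.s then Sigma.ι (fun z : S.s => A.obj z.1) ⟨x.1, h⟩ ≫ coprod.inl
        else Sigma.ι (fun z : T.s => A.obj z.1)
          ⟨x.1, (Finset.mem_union.mp x.2).resolve_left h⟩ ≫ coprod.inr
      hom_inv_id := ?_
      inv_hom_id := ?_ }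
  · apply coprod.hom_ext
    · rw [← Category.assoc, coprod.inl_desc]
      apply Sigma.hom_ext
      intro x
      rw [← Category.assoc,
        ι_transfer A S (unionPtn hUV S T) _ x (Finset.mem_union_left _ x.2) le_rfl,
        Category.assoc, colimit.ι_desc]
      dsimp
      rw [dif_pos x.2]
      simp
    · rw [← Category.assoc, coprod.inr_desc]
      apply Sigma.hom_ext
      intro x
      rw [← Category.assoc,
        ι_transfer A T (unionPtn hUV S T) _ x (Finset.mem_union_right _ x.2) le_rfl,
        Category.assoc, colimit.ι_desc]
      dsimp
      rw [dif_neg (unionPtn_not_mem_left hUV x.2)]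
      simp
  · apply Sigma.hom_ext
    intro x
    rw [← Category.assoc, colimit.ι_desc]
    dsimp
    by_cases h : x.1 ∈ S.s
    · rw [dif_pos h, Category.assoc, coprod.inl_desc,
        ι_transfer A S (unionPtn hUV S T) _ ⟨x.1, h⟩ (Finset.mem_union_left _ h) le_rfl]
      simp
    · rw [dif_neg h, Category.assoc, coprod.inr_desc,
        ι_transfer A T (unionPtn hUV S T) _ ⟨x.1, (Finset.mem_union.mp x.2).resolve_left h⟩
          (Finset.mem_union_right _ ((Finset.mem_union.mp x.2).resolve_left h)) le_rfl]
      simp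

lemma unionIso_hom (A : Clopens Y ⥤ C) {U V : Clopens Y} (hUV : Disjoint U V)
    (S : Ptn U) (T : Ptn V) :
    (unionIso A hUV S T).hom =
      coprod.desc (transfer A S (unionPtn hUV S T) (unionPtn_left_le hUV S T))
        (transfer A T (unionPtn hUV S T) (unionPtn_right_le hUV S T)) := rfl

/-- The limit cone of the two-parameter pair diagram. -/
noncomputable def pairCone (A : Clopens Y ⥤ C) (U V : Clopens Y) : Cone (pairDiag A U V) where
  pt := pair (limit (diag A U)) (limit (diag A V))
  π :=
    { app := fun p => mapPair (limit.π (diag A U) p.1) (limit.π (diag A V) p.2)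
      naturality := fun p q f => by
        apply NatTrans.ext
        funext ⟨j⟩
        cases j
        · exact (Category.id_comp _).trans (limit.w (diag A U) f.1).symm
        · exact (Category.id_comp _).trans (limit.w (diag A V) f.2).symm }

noncomputable def pairConeIsLimit (A : Clopens Y ⥤ C) (U V : Clopens Y) :
    IsLimit (pairCone A U V) := by
  apply evaluationJointlyReflectsLimits
  rintro ⟨j⟩
  cases j
  · let myIso : CategoryTheory.Prod.fst (Ptn U) (Ptn V) ⋙ diag A U ≅
        pairDiag A U V ⋙ (evaluation (Discrete WalkingPair) C).obj ⟨WalkingPair.left⟩ :=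
      NatIso.ofComponents (fun p => Iso.refl _) (by
        intro p q f
        exact (Category.comp_id _).trans (Category.id_comp _).symm)
    haveI : (CategoryTheory.Prod.fst (Ptn U) (Ptn V)).Initial := inferInstance
    have hw : IsLimit ((limit.cone (diag A U)).whisker (CategoryTheory.Prod.fst (Ptn U) (Ptn V))) :=
      (Functor.Initial.isLimitWhiskerEquiv (CategoryTheory.Prod.fst (Ptn U) (Ptn V)) _).symm (limit.isLimit _)
    have h2 : IsLimit ((Cones.postcompose myIso.hom).obj
        ((limit.cone (diag A U)).whisker (CategoryTheory.Prod.fst (Ptn U) (Ptn V)))) :=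
      (IsLimit.postcomposeHomEquiv myIso _).symm hw
    exact h2.ofIsoLimit (Cones.ext (Iso.refl _) (fun p => by exact (Category.comp_id _).trans (Category.id_comp _).symm))
  · let myIso : CategoryTheory.Prod.snd (Ptn U) (Ptn V) ⋙ diag A V ≅
        pairDiag A U V ⋙ (evaluation (Discrete WalkingPair) C).obj ⟨WalkingPair.right⟩ :=
      NatIso.ofComponents (fun p => Iso.refl _) (by
        intro p q f
        exact (Category.comp_id _).trans (Category.id_comp _).symm)
    haveI : (CategoryTheory.Prod.snd (Ptn U) (Ptn V)).Initial := inferInstance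
    have hw : IsLimit ((limit.cone (diag A V)).whisker (CategoryTheory.Prod.snd (Ptn U) (Ptn V))) :=
      (Functor.Initial.isLimitWhiskerEquiv (CategoryTheory.Prod.snd (Ptn U) (Ptn V)) _).symm (limit.isLimit _)
    have h2 : IsLimit ((Cones.postcompose myIso.hom).obj
        ((limit.cone (diag A V)).whisker (CategoryTheory.Prod.snd (Ptn U) (Ptn V)))) :=
      (IsLimit.postcomposeHomEquiv myIso _).symm hw
    exact h2.ofIsoLimit (Cones.ext (Iso.refl _) (fun p => by exact (Category.comp_id _).trans (Category.id_comp _).symm))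

/-- The binary cosheaf condition for the cosheafification. -/
lemma sheafifyBinary (A : Clopens Y ⥤ C) {U V : Clopens Y} (hUV : Disjoint U V)
    (hpres : PreservesLimitsOfShape (Ptn U × Ptn V)
      (colim (J := Discrete WalkingPair) (C := C))) :
    Nonempty (IsColimit (cosheafCofan (sheafifyObj A) U V)) := by
  haveI := hpres
  haveI := unionFun_initial (Y := Y) hUV
  have hW' : IsLimit ((limit.cone (diag A (U ⊔ V))).whisker (unionFun hUV)) :=
    (Functor.Initial.isLimitWhiskerEquiv (unionFun hUV) _).symm (limit.isLimit _)
  have hcl : IsLimit (colim.mapCone (pairCone A U V)) :=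
    isLimitOfPreserves colim (pairConeIsLimit A U V)
  have hψnat : ∀ (p q : Ptn U × Ptn V) (f : p ⟶ q),
      (pairDiag A U V ⋙ colim).map f ≫ (unionIso A hUV q.1 q.2).hom =
        (unionIso A hUV p.1 p.2).hom ≫ (unionFun hUV ⋙ diag A (U ⊔ V)).map f := by
    intro p q f
    have hcm : (pairDiag A U V ⋙ colim).map f =
        coprod.map ((diag A U).map f.1) ((diag A V).map f.2) := rfl
    rw [hcm]
    have hm : (unionFun hUV ⋙ diag A (U ⊔ V)).map f =
        transfer A (unionPtn hUV p.1 p.2) (unionPtn hUV q.1 q.2)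
          (leOfHom ((unionFun hUV).map f)) := rfl
    have h3 : ∀ x ∈ p.1.s, ∃ y ∈ (unionPtn hUV q.1 q.2).s, x ≤ y := by
      intro x hx
      obtain ⟨y, hy, hxy⟩ := leOfHom f.1 x hx
      exact ⟨y, Finset.mem_union_left _ hy, hxy⟩
    have h4 : ∀ x ∈ p.2.s, ∃ y ∈ (unionPtn hUV q.1 q.2).s, x ≤ y := by
      intro x hx
      obtain ⟨y, hy, hxy⟩ := leOfHom f.2 x hx
      exact ⟨y, Finset.mem_union_right _ hy, hxy⟩
    rw [hm]
    apply coprod.hom_ext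
    · erw [← Category.assoc, coprod.inl_map, Category.assoc, unionIso_hom, unionIso_hom,
        coprod.inl_desc, ← Category.assoc, coprod.inl_desc]
      have hdm : (diag A U).map f.1 = transfer A p.1 q.1 (leOfHom f.1) := rfl
      rw [hdm, transfer_transfer A p.1 q.1 (unionPtn hUV q.1 q.2) _ _ h3]
      exact (transfer_transfer A p.1 (unionPtn hUV p.1 p.2) (unionPtn hUV q.1 q.2) _ _ h3).symm
    · erw [← Category.assoc, coprod.inr_map, Category.assoc, unionIso_hom, unionIso_hom,
        coprod.inr_desc, ← Category.assoc, coprod.inr_desc]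
      have hdm : (diag A V).map f.2 = transfer A p.2 q.2 (leOfHom f.2) := rfl
      rw [hdm, transfer_transfer A p.2 q.2 (unionPtn hUV q.1 q.2) _ _ h4]
      exact (transfer_transfer A p.2 (unionPtn hUV p.1 p.2) (unionPtn hUV q.1 q.2) _ _ h4).symm
  let ψ : pairDiag A U V ⋙ colim ≅ unionFun hUV ⋙ diag A (U ⊔ V) :=
    NatIso.ofComponents (fun p => unionIso A hUV p.1 p.2) (hψnat _ _)
  have hQ : IsLimit ((Cones.postcompose ψ.hom).obj (colim.mapCone (pairCone A U V))) :=
    (IsLimit.postcomposeHomEquiv ψ _).symm hcl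
  let θ := hQ.conePointUniqueUpToIso hW'
  have hd : coprod.desc ((sheafifyObj A).map (homOfLE le_sup_left : U ⟶ U ⊔ V))
      ((sheafifyObj A).map (homOfLE le_sup_right)) = θ.hom := by
    apply hW'.hom_ext
    intro p
    erw [IsLimit.conePointUniqueUpToIso_hom_comp]
    have hπw : (Cone.whisker (unionFun hUV) (limit.cone (diag A (U ⊔ V)))).π.app p =
        limit.π (diag A (U ⊔ V)) (unionPtn hUV p.1 p.2) := rfl
    have hπq : ((Cones.postcompose ψ.hom).obj (colim.mapCone (pairCone A U V))).π.app p =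
        colim.map ((pairCone A U V).π.app p) ≫ (unionIso A hUV p.1 p.2).hom := rfl
    rw [hπw, hπq]
    have hcm : colim.map ((pairCone A U V).π.app p) =
        coprod.map (limit.π (diag A U) p.1) (limit.π (diag A V) p.2) := rfl
    rw [hcm]
    apply coprod.hom_ext
    · erw [← Category.assoc, coprod.inl_desc,
        sheafifyObj_map_π' A (homOfLE le_sup_left) (unionPtn hUV p.1 p.2) p.1
          (unionPtn_left_le hUV p.1 p.2), ← Category.assoc, coprod.inl_map, Category.assoc,
        unionIso_hom, coprod.inl_desc]
      rfl
    · erw [← Category.assoc, coprod.inr_desc,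
        sheafifyObj_map_π' A (homOfLE le_sup_right) (unionPtn hUV p.1 p.2) p.2
          (unionPtn_right_le hUV p.1 p.2), ← Category.assoc, coprod.inr_map, Category.assoc,
        unionIso_hom, coprod.inr_desc]
      rfl
  haveI hiso : IsIso ((colimit.isColimit (pair ((sheafifyObj A).obj U)
      ((sheafifyObj A).obj V))).desc (cosheafCofan (sheafifyObj A) U V)) := by
    show IsIso (coprod.desc ((sheafifyObj A).map (homOfLE le_sup_left : U ⟶ U ⊔ V))
      ((sheafifyObj A).map (homOfLE le_sup_right)))
    rw [hd]
    exact Iso.isIso_hom _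
  exact ⟨IsColimit.ofPointIso (colimit.isColimit _)⟩

/-- The cosheafification of any precosheaf is a cosheaf. -/
lemma isCosheaf_sheafifyObj (A : Clopens Y ⥤ C)
    (hpres : ∀ (K : Type u) [SmallCategory K] [IsCofiltered K],
      PreservesLimitsOfShape K (colim (J := Discrete WalkingPair) (C := C))) :
    IsCosheaf (sheafifyObj A) where
  initial := ⟨sheafifyIsInitialBot A⟩
  binary U V hUV := sheafifyBinary A hUV (hpres _)

end Binary

section Adjunction
variable {Y : Type u} [TopologicalSpace Y] {C : Type u₂} [Category.{u} C]
  [HasFiniteColimits C] [HasLimits C]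

lemma Ptn.full_s {U : Clopens Y} (h : U ≠ ⊥) : (Ptn.full U).s = {U} := by
  simp [Ptn.full, h]

/-- The decomposition cone of a cosheaf over the partition diagram. -/
noncomputable def etaCone {B : Clopens Y ⥤ C} (hB : IsCosheaf B) (U : Clopens Y) :
    Cone (diag B U) where
  pt := B.obj U
  π :=
    { app := fun S =>
        haveI := isIso_toObj hB S (fun x hx => S.le_of_mem hx)
        inv (toObj B S (fun x hx => S.le_of_mem hx))
      naturality := fun S T f => by
        haveI := isIso_toObj hB S (fun x hx => S.le_of_mem hx)
        haveI := isIso_toObj hB T (fun x hx => T.le_of_mem hx)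
        dsimp only [Functor.const_obj_obj, Functor.const_obj_map]
        rw [Category.id_comp]
        have hm : (diag B U).map f = transfer B S T (leOfHom f) := rfl
        have ht : transfer B S T (leOfHom f) =
            toObj B S (fun x hx => S.le_of_mem hx) ≫
              inv (toObj B T (fun x hx => T.le_of_mem hx)) :=
          (IsIso.eq_comp_inv _).mpr
            (transfer_toObj B S T (leOfHom f) (fun x hx => T.le_of_mem hx)
              (fun x hx => S.le_of_mem hx))
        rw [ht, ← Category.assoc, IsIso.inv_hom_id, Category.id_comp] }

/-- The unit of cosheafification at a cosheaf. -/
noncomputable def etaApp {B : Clopens Y ⥤ C} (hB : IsCosheaf B) : B ⟶ sheafifyObj B where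
  app U := limit.lift (diag B U) (etaCone hB U)
  naturality {U V} f := by
    apply limit.hom_ext
    intro T
    haveI := isIso_toObj hB T (fun x hx => T.le_of_mem hx)
    haveI := isIso_toObj hB (T.res (leOfHom f))
      (fun x hx => (T.res (leOfHom f)).le_of_mem hx)
    have hres' : ∀ x ∈ (T.res (leOfHom f)).s, x ≤ V :=
      fun x hx => ((T.res (leOfHom f)).le_of_mem hx).trans (leOfHom f)
    erw [Category.assoc, limit.lift_π, Category.assoc, sheafifyObj_map_π B f T,
      ← Category.assoc, limit.lift_π]
    dsimp only [etaCone]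
    rw [← cancel_mono (toObj B T (fun x hx => T.le_of_mem hx)), Category.assoc,
      IsIso.inv_hom_id, Category.comp_id, Category.assoc,
      transfer_toObj B (T.res (leOfHom f)) T (T.res_le (leOfHom f))
        (fun x hx => T.le_of_mem hx) hres',
      ← toObj_map B (T.res (leOfHom f)) (fun x hx => (T.res (leOfHom f)).le_of_mem hx)
        (leOfHom f) hres',
      ← Category.assoc, IsIso.inv_hom_id, Category.id_comp]
    rfl

lemma etaApp_eps {B : Clopens Y ⥤ C} (hB : IsCosheaf B) : etaApp hB ≫ epsApp B = 𝟙 B := by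
  ext U
  dsimp only [NatTrans.comp_app, etaApp, epsApp, NatTrans.id_app]
  erw [← Category.assoc, limit.lift_π]
  dsimp only [etaCone]
  rw [IsIso.inv_hom_id]

variable (Y C) in
/-- The cosheafification functor into the category of cosheaves. -/
noncomputable def sheafR
    (hpres : ∀ (K : Type u) [SmallCategory K] [IsCofiltered K],
      PreservesLimitsOfShape K (colim (J := Discrete WalkingPair) (C := C))) :
    (Clopens Y ⥤ C) ⥤ ObjectProperty.FullSubcategory (fun A : Clopens Y ⥤ C => IsCosheaf A) :=
  ObjectProperty.lift _ sheafifyF (fun A => isCosheaf_sheafifyObj A hpres)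

/-- Forward direction of the cosheafification hom-equivalence. -/
noncomputable def homEquivFun (B : ObjectProperty.FullSubcategory fun A : Clopens Y ⥤ C => IsCosheaf A)
    (A : Clopens Y ⥤ C) (f : B.obj ⟶ A) : B.obj ⟶ sheafifyObj A :=
  etaApp B.property ≫ sheafifyMap B.obj A f

lemma homEquivFun_eps (B : ObjectProperty.FullSubcategory fun A : Clopens Y ⥤ C => IsCosheaf A)
    (A : Clopens Y ⥤ C) (f : B.obj ⟶ A) : homEquivFun B A f ≫ epsApp A = f := by
  have hnat := (eps (Y := Y) (C := C)).naturality f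
  dsimp only [sheafifyF, eps, Functor.id_map] at hnat
  dsimp only [homEquivFun]
  rw [Category.assoc, hnat, ← Category.assoc, etaApp_eps B.2, Category.id_comp]

lemma homEquivFun_sect (B : ObjectProperty.FullSubcategory fun A : Clopens Y ⥤ C => IsCosheaf A)
    (A : Clopens Y ⥤ C) (g : B.obj ⟶ sheafifyObj A) :
    homEquivFun B A (g ≫ epsApp A) = g := by
  dsimp only [homEquivFun]
  ext U S
  haveI := isIso_toObj B.2 S (fun x hx => S.le_of_mem hx)
  dsimp only [NatTrans.comp_app, etaApp, sheafifyMap]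
  erw [Category.assoc, limMap_π, ← Category.assoc, limit.lift_π]
  dsimp only [etaCone, diagMap]
  rw [← cancel_epi (toObj B.1 S (fun x hx => S.le_of_mem hx)), ← Category.assoc,
    IsIso.hom_inv_id, Category.id_comp]
  apply Sigma.hom_ext
  intro x
  have hxb : x.1 ≠ ⊥ := S.nbot x.1 x.2
  have hL : Sigma.ι (fun z : S.s => B.1.obj z.1) x ≫
      Limits.Sigma.map (fun z : S.s => NatTrans.app (g ≫ epsApp A) z.1) =
      NatTrans.app (g ≫ epsApp A) x.1 ≫ Sigma.ι (fun z : S.s => A.obj z.1) x := by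
    simp
  have hι : Sigma.ι (fun z : S.s => B.1.obj z.1) x ≫
      toObj B.1 S (fun x hx => S.le_of_mem hx) =
      B.1.map (homOfLE (S.le_of_mem x.2)) := by
    simp [toObj]
  have hgnat := g.naturality (homOfLE (S.le_of_mem x.2))
  have hfull : ∀ z ∈ (Ptn.full x.1).s, ∃ y ∈ S.s, z ≤ y := by
    intro z hz
    rw [Ptn.full_s hxb, Finset.mem_singleton] at hz
    subst hz
    exact ⟨x.1, x.2, le_rfl⟩
  rw [hL]
  conv_rhs => rw [← Category.assoc, hι, ← Category.assoc, hgnat, Category.assoc,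
    sheafifyObj_map_π' A (homOfLE (S.le_of_mem x.2)) S (Ptn.full x.1) hfull]
  dsimp only [NatTrans.comp_app, epsApp]
  conv_lhs => rw [Category.assoc, Category.assoc,
    toObj_comp_ι A (Ptn.full x.1) S x.2 (fun z hz => Ptn.le_of_mem _ hz)]

variable (Y C) in
/-- The cosheafification adjunction. -/
noncomputable def sheafAdj
    (hpres : ∀ (K : Type u) [SmallCategory K] [IsCofiltered K],
      PreservesLimitsOfShape K (colim (J := Discrete WalkingPair) (C := C))) :
    ObjectProperty.ι (fun A : Clopens Y ⥤ C => IsCosheaf A) ⊣ sheafR Y C hpres :=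
  Adjunction.mkOfHomEquiv
    { homEquiv := fun B A =>
        { toFun := fun f => ObjectProperty.homMk (homEquivFun B A f)
          invFun := fun g => g.hom ≫ epsApp A
          left_inv := fun f => homEquivFun_eps B A f
          right_inv := fun g => ObjectProperty.hom_ext _ (homEquivFun_sect B A g.hom) }
      homEquiv_naturality_left_symm := fun {X' X A} f g => by
        exact Category.assoc f.hom g.hom (epsApp A)
      homEquiv_naturality_right := fun {B A A'} f g => by
        dsimp only [Equiv.coe_fn_mk, homEquivFun]
        apply ObjectProperty.hom_ext
        have hc : sheafifyMap B.obj A' (f ≫ g) =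
            sheafifyMap B.obj A f ≫ sheafifyMap A A' g := sheafifyF.map_comp f g
        have h2 : (etaApp B.property ≫ sheafifyMap B.obj A f) ≫ ((sheafR Y C hpres).map g).hom =
            etaApp B.property ≫ sheafifyMap B.obj A f ≫ sheafifyMap A A' g := by
          exact Category.assoc _ _ _
        exact (congrArg (fun k => etaApp B.property ≫ k) hc).trans h2.symm }

end Adjunction

section Bridge
variable {C : Type u₂} [Category.{u} C]

/-- If cofiltered `K`-limits commute with `J`-colimits in `C`, then the limit functor
`(K ⥤ C) ⥤ C` preserves `J`-colimits. -/
lemma limPreservesColimitsOfShape (J : Type) [SmallCategory J] [FinCategory J]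
    (K : Type u) [SmallCategory K] [IsCofiltered K] [HasLimitsOfShape K C]
    [HasColimitsOfShape J C]
    (hp : PreservesLimitsOfShape K (colim (J := J) (C := C))) :
    PreservesColimitsOfShape J (lim (J := K) (C := C)) := by
  constructor
  intro G
  constructor
  intro c hc
  haveI := hp
  let e : G.flip ⋙ colim ≅ c.pt :=
    NatIso.ofComponents
      (fun k => (colimit.isColimit (G.flip.obj k)).coconePointUniqueUpToIso
        (isColimitOfPreserves ((evaluation K C).obj k) hc))
      (fun {k k'} f => by
        apply colimit.hom_ext
        intro j
        have hcm : (G.flip ⋙ colim).map f = colimMap (G.flip.map f) := rfl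
        have h1 : colimit.ι (G.flip.obj k') j ≫
            ((colimit.isColimit (G.flip.obj k')).coconePointUniqueUpToIso
              (isColimitOfPreserves ((evaluation K C).obj k') hc)).hom =
            (c.ι.app j).app k' :=
          IsColimit.comp_coconePointUniqueUpToIso_hom _ _ _
        have h2 : colimit.ι (G.flip.obj k) j ≫
            ((colimit.isColimit (G.flip.obj k)).coconePointUniqueUpToIso
              (isColimitOfPreserves ((evaluation K C).obj k) hc)).hom =
            (c.ι.app j).app k :=
          IsColimit.comp_coconePointUniqueUpToIso_hom _ _ _
        conv_lhs => rw [← Category.assoc, hcm, ι_colimMap, Category.assoc, h1]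
        conv_rhs => rw [← Category.assoc, h2]
        exact ((c.ι.app j).naturality f))
  have hlim : IsLimit (colim.mapCone (limit.cone G.flip)) :=
    isLimitOfPreserves colim (limit.isLimit G.flip)
  let i1 : colim.obj (limit G.flip) ≅ limit (G.flip ⋙ colim) :=
    hlim.conePointUniqueUpToIso (limit.isLimit _)
  let i2 : limit (G.flip ⋙ colim) ≅ limit c.pt := HasLimit.isoOfNatIso e
  let w : G ⋙ lim ≅ limit G.flip :=
    NatIso.ofComponents (fun j => (limitObjIsoLimitCompEvaluation G.flip j).symm)
      (fun {j j'} f => by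
        dsimp only [Iso.symm_hom]
        rw [Iso.comp_inv_eq, Category.assoc, limit_map_limitObjIsoLimitCompEvaluation_hom,
          Iso.inv_hom_id_assoc]
        rfl)
  let i3 : colimit (G ⋙ lim) ≅ colim.obj (limit G.flip) := HasColimit.isoOfNatIso w
  have hdesc : colimit.desc (G ⋙ lim) (lim.mapCocone c) = i3.hom ≫ i1.hom ≫ i2.hom := by
    apply colimit.hom_ext
    intro j
    apply limit.hom_ext
    intro k
    rw [colimit.ι_desc]
    have hL : (lim.mapCocone c).ι.app j ≫ limit.π c.pt k =
        limit.π (G.obj j) k ≫ (c.ι.app j).app k := by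
      have h0 : (lim.mapCocone c).ι.app j = limMap (c.ι.app j) := rfl
      rw [h0]
      exact limMap_π (c.ι.app j) k
    rw [Category.assoc, hL]
    have h3 : colimit.ι (G ⋙ lim) j ≫ i3.hom =
        w.hom.app j ≫ colimit.ι (limit G.flip) j := HasColimit.isoOfNatIso_ι_hom w j
    have h2 : i2.hom ≫ limit.π c.pt k =
        limit.π (G.flip ⋙ colim) k ≫ e.hom.app k := HasLimit.isoOfNatIso_hom_π e k
    have h1 : i1.hom ≫ limit.π (G.flip ⋙ colim) k =
        colim.map (limit.π G.flip k) :=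
      hlim.conePointUniqueUpToIso_hom_comp (limit.isLimit _) k
    have h4 : colimit.ι (limit G.flip) j ≫ colim.map (limit.π G.flip k) =
        (limit.π G.flip k).app j ≫ colimit.ι (G.flip.obj k) j := by
      have h0 : colim.map (limit.π G.flip k) = colimMap (limit.π G.flip k) := rfl
      rw [h0, ι_colimMap]
    have h5 : colimit.ι (G.flip.obj k) j ≫ e.hom.app k = (c.ι.app j).app k := by
      dsimp only [e, NatIso.ofComponents]
      exact IsColimit.comp_coconePointUniqueUpToIso_hom _ _ _
    have h6 : w.hom.app j ≫ (limit.π G.flip k).app j =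
        limit.π (G.flip ⋙ (evaluation J C).obj j) k := by
      dsimp only [w, NatIso.ofComponents, Iso.symm]
      exact limitObjIsoLimitCompEvaluation_inv_π_app G.flip k j
    have h12 : i1.hom ≫ i2.hom ≫ limit.π c.pt k =
        colim.map (limit.π G.flip k) ≫ e.hom.app k := by
      rw [h2, ← Category.assoc, h1]
    conv_rhs => rw [Category.assoc i3.hom (i1.hom ≫ i2.hom) (limit.π c.pt k),
      Category.assoc i1.hom i2.hom (limit.π c.pt k), h12, ← Category.assoc, h3, Category.assoc]
    have h45 : colimit.ι (limit G.flip) j ≫ colim.map (limit.π G.flip k) ≫ e.hom.app k =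
        (limit.π G.flip k).app j ≫ (c.ι.app j).app k := by
      rw [← Category.assoc, h4, Category.assoc, h5]
    conv_rhs => rw [h45, ← Category.assoc, h6]
    rfl
  haveI : IsIso ((colimit.isColimit (G ⋙ lim)).desc (lim.mapCocone c)) := by
    show IsIso (colimit.desc (G ⋙ lim) (lim.mapCocone c))
    rw [hdesc]
    infer_instance
  exact ⟨IsColimit.ofPointIso (colimit.isColimit (G ⋙ lim))⟩

end Bridge

section Preservation
variable {Y : Type u} [TopologicalSpace Y] {C : Type u₂} [Category.{u} C]
  [HasFiniteColimits C] [HasLimits C]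

/-- The partition diagram as a functor of the precosheaf. -/
noncomputable def diagFun (U : Clopens Y) : (Clopens Y ⥤ C) ⥤ (Ptn U ⥤ C) where
  obj A := diag A U
  map {A B} φ := diagMap A B φ U
  map_id A := by
    apply NatTrans.ext
    funext S
    apply Sigma.hom_ext
    intro x
    simp only [diagMap, NatTrans.id_app]
    exact (by simp : Sigma.ι (fun x : S.s => A.obj x.1) x ≫
      Limits.Sigma.map (fun z : S.s => 𝟙 (A.obj z.1)) = Sigma.ι (fun x : S.s => A.obj x.1) x).trans
      (Category.comp_id _).symm
  map_comp φ ψ := by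
    apply NatTrans.ext
    funext S
    apply Sigma.hom_ext
    intro x
    simp [diagMap]

lemma preservesColimitsOfShape_sheafifyF (J : Type) [SmallCategory J] [FinCategory J]
    (hcomm : ∀ (J' : Type) [SmallCategory J'] [FinCategory J'] (K : Type u) [SmallCategory K]
      [IsCofiltered K], PreservesLimitsOfShape K (colim (J := J') (C := C))) :
    PreservesColimitsOfShape J (sheafifyF : (Clopens Y ⥤ C) ⥤ (Clopens Y ⥤ C)) := by
  apply preservesColimitsOfShape_of_evaluation
  intro U
  haveI h1 : PreservesColimitsOfShape J (diagFun (C := C) U) := by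
    apply preservesColimitsOfShape_of_evaluation
    intro S
    let G : Discrete (↥S.s) ⥤ Clopens Y := Discrete.functor fun x => (x : Clopens Y)
    let e : ((Functor.whiskeringLeft (Discrete ↥S.s) (Clopens Y) C).obj G ⋙ colim) ≅
        (diagFun (C := C) U ⋙ (evaluation (Ptn U) C).obj S) :=
      NatIso.ofComponents
        (fun A => HasColimit.isoOfNatIso (Discrete.natIso fun x => Iso.refl _))
        (fun {A B} φ => by
          apply colimit.hom_ext
          intro j
          simp [diagFun, diagMap, G]
          exact (Sigma.ι_map (f := fun x : S.s => A.obj x.1) (g := fun x : S.s => B.obj x.1) (fun x => φ.app x.1) j.as).symm)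
    exact preservesColimitsOfShape_of_natIso e
  haveI h2 : PreservesColimitsOfShape J (lim (J := Ptn U) (C := C)) :=
    limPreservesColimitsOfShape J (Ptn U) (hcomm J (Ptn U))
  let e2 : (diagFun (C := C) U ⋙ lim) ≅
      ((sheafifyF : (Clopens Y ⥤ C) ⥤ _) ⋙ (evaluation (Clopens Y) C).obj U) :=
    NatIso.ofComponents (fun A => Iso.refl _)
      (fun {A B} φ => by
        dsimp only [Iso.refl]
        erw [Category.comp_id, Category.id_comp]
        rfl)
  exact preservesColimitsOfShape_of_natIso e2

lemma preservesColimitsOfShape_sheafR (J : Type) [SmallCategory J] [FinCategory J]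
    (hcomm : ∀ (J' : Type) [SmallCategory J'] [FinCategory J'] (K : Type u) [SmallCategory K]
      [IsCofiltered K], PreservesLimitsOfShape K (colim (J := J') (C := C)))
    (hpres : ∀ (K : Type u) [SmallCategory K] [IsCofiltered K],
      PreservesLimitsOfShape K (colim (J := Discrete WalkingPair) (C := C))) :
    PreservesColimitsOfShape J (sheafR Y C hpres) := by
  haveI := preservesColimitsOfShape_sheafifyF (Y := Y) (C := C) J hcomm
  haveI : ReflectsColimitsOfSize.{0, 0}
      (ObjectProperty.ι (fun A : Clopens Y ⥤ C => IsCosheaf A)) :=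
    fullyFaithful_reflectsColimits _
  haveI : PreservesColimitsOfShape J
      (sheafR Y C hpres ⋙ ObjectProperty.ι (fun A : Clopens Y ⥤ C => IsCosheaf A)) := by
    have heq : sheafR Y C hpres ⋙
        ObjectProperty.ι (fun A : Clopens Y ⥤ C => IsCosheaf A) = sheafifyF :=
      rfl
    rw [heq]
    infer_instance
  exact preservesColimitsOfShape_of_reflects_of_preserves (sheafR Y C hpres)
    (ObjectProperty.ι (fun A : Clopens Y ⥤ C => IsCosheaf A))

end Preservation


/-- **Statement 8.** If `C` has all limits and finite colimits, and cofiltered limits commute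
with finite colimits in `C`, then the cosheafification functor (any right adjoint of the
inclusion of cosheaves into precosheaves) is exact: it preserves all limits and all finite
colimits. -/
theorem cosheafification_exact (C : Type u₂) [Category.{u} C] [HasLimits C]
    [HasFiniteColimits C] (hcomm : CofilteredLimitsCommuteWithFiniteColimits.{u} C)
    (X : Profinite.{u}) (R : (Clopens X ⥤ C) ⥤ CoSheaf X C)
    (adj : ObjectProperty.ι (fun A : Clopens X ⥤ C => IsCosheaf A) ⊣ R) :
    PreservesLimitsOfSize.{u, u} R ∧ PreservesFiniteColimits R := by
  have hpresb : ∀ (K : Type u) [SmallCategory K] [IsCofiltered K],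
      PreservesLimitsOfShape K (colim (J := Discrete WalkingPair) (C := C)) :=
    fun K _ _ => hcomm (Discrete WalkingPair) K
  constructor
  · exact adj.rightAdjoint_preservesLimits
  · constructor
    intro J _ _
    have e : R ≅ sheafR (X : Type u) C hpresb :=
      Adjunction.rightAdjointUniq adj (sheafAdj (X : Type u) C hpresb)
    haveI : @PreservesColimitsOfShape (Clopens X ⥤ C) _ (CoSheaf X C) _ J _
        (sheafR (X : Type u) C hpresb) :=
      preservesColimitsOfShape_sheafR (Y := (X : Type u)) (C := C) J
      (fun J' _ _ K _ _ => hcomm J' K) hpresb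
    exact preservesColimitsOfShape_of_natIso e.symm

end ProfiniteCosheaves
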